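/- Let & be either the usual multiplication p & q = p·q or the Łukasiewicz operation p & q = max(p + q − 1, 0) on [0,1], and let Δ_& be the quantale of distance distribution functions with the convolution product ⊗ and unit k. Then for every up-directed subset Φ ⊆ Δ_&: sup_{φ ∈ Φ} ((sup Φ) ⊸ φ) = k, where for ψ, χ ∈ Δ_& one sets ψ ⊸ χ = sup{ρ ∈ Δ_& | ψ ⊗ ρ ≤ χ}. -/

import Mathlib

open scoped ENNReal

instance : Fact ((0 : ℝ) ≤ 1) := ⟨zero_le_one⟩

/-- `φ : [0,∞] → [0,1]` is a distance distribution function if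
`sup_{s < t} φ(s) = φ(t)` for all `t`. -/
def IsDDF (φ : ℝ≥0∞ → unitInterval) : Prop :=
  ∀ t : ℝ≥0∞, (⨆ s : {s : ℝ≥0∞ // s < t}, φ s.1) = φ t

/-- The type of distance distribution functions. -/
def DDF : Type := {φ : ℝ≥0∞ → unitInterval // IsDDF φ}

/-- The convolution product on functions `[0,∞] → [0,1]` with respect to a
binary operation `&` on `[0,1]`: `(φ ⊗ ψ)(t) = sup_{r + s ≤ t} φ(r) & ψ(s)`. -/
noncomputable def convProd (amp : unitInterval → unitInterval → unitInterval)
    (f g : ℝ≥0∞ → unitInterval) : ℝ≥0∞ → unitInterval :=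
  fun t => ⨆ p : {p : ℝ≥0∞ × ℝ≥0∞ // p.1 + p.2 ≤ t}, amp (f p.1.1) (g p.1.2)

/-- The unit `k` of the quantale `Δ_&`: `k(0) = 0` and `k(t) = 1` for `t > 0`. -/
noncomputable def kDDF : ℝ≥0∞ → unitInterval := fun t => if t = 0 then 0 else 1

lemma ddf_mono (φ : DDF) : Monotone φ.1 := by
  intro s t hst
  rcases eq_or_lt_of_le hst with rfl | h
  · exact le_rfl
  · rw [← φ.2 t]
    exact le_iSup (fun s : {s : ℝ≥0∞ // s < t} => φ.1 s.1) ⟨s, h⟩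

lemma ddf_zero (φ : DDF) : φ.1 0 = 0 := by
  rw [← φ.2 0]
  refine le_antisymm (iSup_le fun s => absurd s.2 (by simp)) bot_le

lemma exists_lt_of_lt_biSup {Φ : Set DDF} {u : ℝ≥0∞} {a : unitInterval}
    (h : a < ⨆ ψ ∈ Φ, ψ.1 u) : ∃ ψ ∈ Φ, a < ψ.1 u := by
  by_contra hc
  push_neg at hc
  exact absurd (iSup₂_le fun ψ hψ => hc ψ hψ) (not_le.2 h)

lemma Fmono (Φ : Set DDF) : Monotone (fun u => ⨆ ψ ∈ Φ, ψ.1 u) :=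
  fun u v huv => iSup₂_mono fun ψ _ => ddf_mono ψ huv

lemma Fzero (Φ : Set DDF) : (⨆ ψ ∈ Φ, ψ.1 0) = 0 :=
  le_antisymm (iSup₂_le fun ψ _ => le_of_eq (ddf_zero ψ)) bot_le

lemma directed_list (Φ : Set DDF) (hΦne : Φ.Nonempty)
    (hΦdir : ∀ φ ∈ Φ, ∀ ψ ∈ Φ, ∃ χ ∈ Φ,
      (∀ t, φ.1 t ≤ χ.1 t) ∧ (∀ t, ψ.1 t ≤ χ.1 t)) :
    ∀ L : List DDF, (∀ ψ ∈ L, ψ ∈ Φ) → ∃ χ ∈ Φ, ∀ ψ ∈ L, ∀ t, ψ.1 t ≤ χ.1 t := by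
  intro L
  induction L with
  | nil => exact fun _ => ⟨hΦne.choose, hΦne.choose_spec, by simp⟩
  | cons ψ L ih =>
    intro hmem
    obtain ⟨χ, hχΦ, hχ⟩ := ih fun ψ' h => hmem ψ' (List.mem_cons_of_mem _ h)
    obtain ⟨χ', hχ'Φ, h1, h2⟩ := hΦdir ψ (hmem ψ List.mem_cons_self) χ hχΦ
    refine ⟨χ', hχ'Φ, ?_⟩
    intro ψ' hψ' t
    rcases List.mem_cons.1 hψ' with rfl | h
    · exact h1 t
    · exact le_trans (hχ ψ' h t) (h2 t)

lemma level_lemma (Φ : Set DDF) (δ : ℝ≥0∞) (hδ0 : 0 < δ)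
    (v : unitInterval) (hv : v < ⨆ ψ ∈ Φ, ψ.1 ⊤) :
    ∃ u : ℝ≥0∞, ∃ g : DDF, g ∈ Φ ∧ v < g.1 u ∧
      ∀ s, v < (⨆ ψ ∈ Φ, ψ.1 (s - δ)) → u ≤ s := by
  set S : Set ℝ≥0∞ := {u | v < ⨆ ψ ∈ Φ, ψ.1 u} with hSdef
  have hStop : ⊤ ∈ S := hv
  by_cases ha : sInf S = ⊤
  · obtain ⟨g, hgΦ, hgv⟩ := exists_lt_of_lt_biSup hv
    refine ⟨⊤, g, hgΦ, hgv, ?_⟩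
    intro s h
    have hsS : s - δ ∈ S := h
    have h1 : s - δ = ⊤ := top_le_iff.1 (ha ▸ sInf_le hsS)
    exact top_le_iff.1 (h1 ▸ tsub_le_self : (⊤ : ℝ≥0∞) ≤ s) ▸ le_rfl
  · have h1 : sInf S < sInf S + δ := ENNReal.lt_add_right ha hδ0.ne'
    obtain ⟨u, huS, hult⟩ := sInf_lt_iff.1 h1
    obtain ⟨g, hgΦ, hgv⟩ := exists_lt_of_lt_biSup huS
    refine ⟨u, g, hgΦ, hgv, ?_⟩
    intro s h
    have hδs : δ ≤ s := by
      by_contra hs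
      push_neg at hs
      rw [tsub_eq_zero_of_le hs.le, Fzero] at h
      exact absurd h (not_lt.2 bot_le)
    have h2 : sInf S ≤ s - δ := sInf_le h
    have h3 : sInf S + δ ≤ (s - δ) + δ := add_le_add_left h2 δ
    rw [tsub_add_cancel_of_le hδs] at h3
    exact (hult.trans_le h3).le

lemma key_lemma (Φ : Set DDF) (hΦne : Φ.Nonempty)
    (hΦdir : ∀ φ ∈ Φ, ∀ ψ ∈ Φ, ∃ χ ∈ Φ,
      (∀ t, φ.1 t ≤ χ.1 t) ∧ (∀ t, ψ.1 t ≤ χ.1 t))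
    (c : ℝ) (hc0 : 0 ≤ c) (hc1 : c < 1)
    (δ : ℝ≥0∞) (hδ0 : 0 < δ) :
    ∃ φ ∈ Φ, ∀ s : ℝ≥0∞,
      c * ((⨆ ψ ∈ Φ, ψ.1 (s - δ) : unitInterval) : ℝ) ≤ (φ.1 s : ℝ) := by
  classical
  set F : ℝ≥0∞ → unitInterval := fun u => ⨆ ψ ∈ Φ, ψ.1 u with hF
  by_cases hM : (F ⊤ : ℝ) ≤ 0
  · obtain ⟨φ₀, hφ₀⟩ := hΦne
    refine ⟨φ₀, hφ₀, fun s => ?_⟩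
    have h1 : (F (s - δ) : ℝ) ≤ 0 :=
      le_trans (Subtype.coe_le_coe.2 (Fmono Φ (le_top : s - δ ≤ ⊤))) hM
    have h2 : 0 ≤ (F (s - δ) : ℝ) := (F (s - δ)).2.1
    have h3 : (F (s-δ) : ℝ) = 0 := le_antisymm h1 h2
    rw [h3, mul_zero]
    exact (φ₀.1 s).2.1
  · push_neg at hM
    set M : ℝ := (F ⊤ : ℝ) with hMdef
    have hM1 : M ≤ 1 := (F ⊤).2.2
    set c₀ : ℝ := (1 + c) / 2 with hc₀def
    have hc₀1 : c₀ < 1 := by rw [hc₀def]; linarith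
    have hcc₀ : c < c₀ := by rw [hc₀def]; linarith
    have hc₀0 : 0 < c₀ := by rw [hc₀def]; linarith
    -- positivity level
    have hbot : (⊥ : unitInterval) < F ⊤ := by
      rw [← Subtype.coe_lt_coe]
      exact hM
    obtain ⟨u', g', hg'Φ, hg'lt, hg'le⟩ := level_lemma Φ δ hδ0 ⊥ hbot
    set m : ℝ := (g'.1 u' : ℝ) with hmdef
    have hm0 : 0 < m := by
      have := Subtype.coe_lt_coe.2 hg'lt
      simpa [hmdef] using this
    obtain ⟨n, hn⟩ := exists_pow_lt_of_lt_one hm0 hc₀1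
    -- levels
    have hVmem : ∀ j : ℕ, M * c₀ ^ (j + 1) ∈ Set.Icc (0 : ℝ) 1 := by
      intro j
      constructor
      · positivity
      · have h1 : c₀ ^ (j+1) ≤ 1 := pow_le_one₀ hc₀0.le hc₀1.le
        nlinarith
    set V : ℕ → unitInterval := fun j => ⟨M * c₀ ^ (j + 1), hVmem j⟩ with hVdef
    have hVlt : ∀ j, V j < F ⊤ := by
      intro j
      rw [← Subtype.coe_lt_coe]
      show M * c₀ ^ (j + 1) < M
      have h1 : c₀ ^ (j+1) < 1 := pow_lt_one₀ hc₀0.le hc₀1 (Nat.succ_ne_zero j)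
      nlinarith
    choose u g hgΦ hglt hgle using fun j => level_lemma Φ δ hδ0 (V j) (hVlt j)
    -- directed upper bound
    obtain ⟨χ, hχΦ, hχub⟩ := directed_list Φ hΦne hΦdir
      (g' :: (List.range (n + 1)).map g) (by
        intro ψ h
        rcases List.mem_cons.1 h with rfl | h
        · exact hg'Φ
        · obtain ⟨j, _, rfl⟩ := List.mem_map.1 h
          exact hgΦ j)
    refine ⟨χ, hχΦ, fun s => ?_⟩
    set x : ℝ := (F (s - δ) : ℝ) with hxdef
    have hx0 : 0 ≤ x := (F (s - δ)).2.1
    have hxM : x ≤ M := Subtype.coe_le_coe.2 (Fmono Φ (le_top : s - δ ≤ ⊤))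
    have hχmono := ddf_mono χ
    have hub' : ∀ τ, g'.1 τ ≤ χ.1 τ := hχub g' List.mem_cons_self
    have hubj : ∀ j, j ≤ n → ∀ τ, (g j).1 τ ≤ χ.1 τ := fun j hj =>
      hχub (g j) (List.mem_cons_of_mem _
        (List.mem_map_of_mem (f := g) (List.mem_range.2 (Nat.lt_succ_of_le hj))))
    rcases eq_or_lt_of_le hx0 with hx | hx
    · rw [← hx, mul_zero]
      exact (χ.1 s).2.1
    · -- 0 < x
      have hFb : (⊥ : unitInterval) < F (s - δ) := by
        rw [← Subtype.coe_lt_coe]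
        simpa [hxdef] using hx
      have hu's : u' ≤ s := hg'le s hFb
      have hms : m ≤ (χ.1 s : ℝ) :=
        le_trans (Subtype.coe_le_coe.2 (hub' u')) (Subtype.coe_le_coe.2 (hχmono hu's))
      by_cases htail : x ≤ M * c₀ ^ (n + 1)
      · have hp : (0:ℝ) ≤ c₀ ^ n := pow_nonneg hc₀0.le n
        have hps : c₀ ^ (n+1) = c₀ ^ n * c₀ := pow_succ c₀ n
        have h1 : c * x ≤ c * (M * c₀ ^ (n+1)) := mul_le_mul_of_nonneg_left htail hc0
        have h2 : c * (M * c₀ ^ (n+1)) = (c * M * c₀) * c₀ ^ n := by rw [hps]; ring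
        have hcM : c * M ≤ 1 := by nlinarith
        have hcm : c * M * c₀ ≤ 1 := by nlinarith [mul_nonneg hc0 hM.le]
        have h3 : (c * M * c₀) * c₀ ^ n ≤ 1 * c₀ ^ n := mul_le_mul_of_nonneg_right hcm hp
        have h4 : c * x ≤ c₀ ^ n := by rw [h2] at h1; linarith
        linarith
      · push_neg at htail
        have hex : ∃ j, M * c₀ ^ (j + 1) < x := ⟨n, htail⟩
        set j := Nat.find hex with hjdef
        have hj : M * c₀ ^ (j + 1) < x := Nat.find_spec hex
        have hjn : j ≤ n := Nat.find_le htail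
        have hVjF : V j < F (s - δ) := by
          rw [← Subtype.coe_lt_coe]
          exact hj
        have hujs : u j ≤ s := hgle j s hVjF
        have hchain : M * c₀ ^ (j + 1) ≤ (χ.1 s : ℝ) := by
          have h1 : (V j : ℝ) ≤ ((g j).1 (u j) : ℝ) := (Subtype.coe_lt_coe.2 (hglt j)).le
          have h2 : ((g j).1 (u j) : ℝ) ≤ (χ.1 (u j) : ℝ) := Subtype.coe_le_coe.2 (hubj j hjn (u j))
          have h3 : (χ.1 (u j) : ℝ) ≤ (χ.1 s : ℝ) := Subtype.coe_le_coe.2 (hχmono hujs)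
          calc M * c₀ ^ (j+1) = (V j : ℝ) := rfl
            _ ≤ _ := le_trans h1 (le_trans h2 h3)
        have hcx : c * x ≤ M * c₀ ^ (j + 1) := by
          rcases Nat.eq_zero_or_pos j with hj0 | hj0
          · rw [hj0]
            have : c₀ ^ (0+1) = c₀ := by ring
            rw [this]
            nlinarith
          · have hmin : ¬ M * c₀ ^ ((j - 1) + 1) < x := Nat.find_min hex (Nat.sub_lt hj0 one_pos)
            push_neg at hmin
            have hpow : (j - 1) + 1 = j := Nat.succ_pred_eq_of_pos hj0
            rw [hpow] at hmin
            have hps : c₀ ^ (j+1) = c₀ ^ j * c₀ := pow_succ c₀ j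
            have hp : (0:ℝ) ≤ M * c₀ ^ j := by positivity
            nlinarith
        linarith

/-- the step function: 0 for s ≤ δ, C above -/
noncomputable def stepDDF (δ : ℝ≥0∞) (C : unitInterval) : DDF :=
  ⟨fun s => if s ≤ δ then 0 else C, by
    intro τ
    change (⨆ s : {s : ℝ≥0∞ // s < τ}, if s.1 ≤ δ then (0:unitInterval) else C)
      = if τ ≤ δ then (0:unitInterval) else C
    by_cases hτ : τ ≤ δ
    · rw [if_pos hτ]
      refine le_antisymm (iSup_le ?_) bot_le
      rintro ⟨s', hs'⟩
      rw [if_pos (hs'.le.trans hτ)]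
    · push_neg at hτ
      rw [if_neg (not_le.2 hτ)]
      refine le_antisymm (iSup_le ?_) ?_
      · rintro ⟨s', _⟩
        by_cases h : s' ≤ δ
        · rw [if_pos h]; exact bot_le
        · rw [if_neg h]
      · obtain ⟨s₀, h1, h2⟩ := exists_between hτ
        calc C = if s₀ ≤ δ then 0 else C := (if_neg (not_le.2 h1)).symm
          _ ≤ _ := le_iSup (fun s' : {s' : ℝ≥0∞ // s' < τ} =>
              if s'.1 ≤ δ then (0:unitInterval) else C) ⟨s₀, h2⟩⟩

/-- **Proposition 8.4** of the paper: let `&` be either multiplication or the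
Łukasiewicz operation on `[0,1]` and let `Δ_&` be the quantale of distance
distribution functions with the convolution product `⊗` (with suprema computed
pointwise). Then for every up-directed `Φ ⊆ Δ_&`:
`sup_{φ ∈ Φ} ((sup Φ) ⊸ φ) = k`, where `ψ ⊸ χ = sup {ρ ∈ Δ_& | ψ ⊗ ρ ≤ χ}`. -/
theorem up_directed_himp_sup_eq_unit
    (amp : unitInterval → unitInterval → unitInterval)
    (hamp : (∀ p q, amp p q = p * q) ∨
      (∀ p q, (amp p q : ℝ) = max ((p : ℝ) + (q : ℝ) - 1) 0))
    (Φ : Set DDF) (hΦne : Φ.Nonempty)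
    (hΦdir : ∀ φ ∈ Φ, ∀ ψ ∈ Φ, ∃ χ ∈ Φ,
      (∀ t, φ.1 t ≤ χ.1 t) ∧ (∀ t, ψ.1 t ≤ χ.1 t)) :
    ∀ t : ℝ≥0∞,
      (⨆ φ ∈ Φ, ⨆ ρ : DDF, ⨆ _ : ∀ s : ℝ≥0∞,
          convProd amp (fun u => ⨆ ψ ∈ Φ, ψ.1 u) ρ.1 s ≤ φ.1 s,
        ρ.1 t) = kDDF t := by
  intro t
  by_cases ht : t = 0
  · subst ht
    have hk : kDDF 0 = 0 := by simp [kDDF]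
    rw [hk]
    refine le_antisymm (iSup₂_le fun φ _ => iSup_le fun ρ => iSup_le fun _ => ?_) bot_le
    exact le_of_eq (ddf_zero ρ)
  · have ht0 : 0 < t := pos_iff_ne_zero.2 ht
    have hk : kDDF t = 1 := by simp [kDDF, ht]
    rw [hk]
    refine le_antisymm (iSup₂_le fun φ _ => iSup_le fun ρ => iSup_le fun _ => ?_) ?_
    · rw [← Subtype.coe_le_coe]
      simpa using (ρ.1 t).2.2
    · by_contra hlt
      push_neg at hlt
      set S := ⨆ φ ∈ Φ, ⨆ ρ : DDF, ⨆ _ : ∀ s : ℝ≥0∞,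
          convProd amp (fun u => ⨆ ψ ∈ Φ, ψ.1 u) ρ.1 s ≤ φ.1 s, ρ.1 t with hSdef
      have hS1 : (S : ℝ) < 1 := by
        have := Subtype.coe_lt_coe.2 hlt
        simpa using this
      have hS0 : (0:ℝ) ≤ (S : ℝ) := S.2.1
      set c : ℝ := ((S : ℝ) + 1) / 2 with hcdef
      have hc0 : 0 ≤ c := by rw [hcdef]; linarith
      have hc1 : c < 1 := by rw [hcdef]; linarith
      have hSc : (S : ℝ) < c := by rw [hcdef]; linarith
      obtain ⟨δ, hδ0, hδt⟩ := exists_between ht0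
      have hδtop : δ ≠ ⊤ := (lt_of_lt_of_le hδt le_top).ne
      obtain ⟨φ, hφΦ, hφ⟩ := key_lemma Φ hΦne hΦdir c hc0 hc1 δ hδ0
      set C : unitInterval := ⟨c, hc0, hc1.le⟩ with hCdef
      set ρ : DDF := stepDDF δ C with hρdef
      have hFmono := Fmono Φ
      have hconv : ∀ s, convProd amp (fun u => ⨆ ψ ∈ Φ, ψ.1 u) ρ.1 s ≤ φ.1 s := by
        intro s
        refine iSup_le ?_
        rintro ⟨⟨r, u⟩, hru⟩
        rw [← Subtype.coe_le_coe]
        show (amp ((⨆ ψ ∈ Φ, ψ.1 r : unitInterval)) (ρ.1 u) : ℝ) ≤ (φ.1 s : ℝ)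
        set Fr : unitInterval := ⨆ ψ ∈ Φ, ψ.1 r with hFrdef
        by_cases hu : u ≤ δ
        · have hρu : ρ.1 u = 0 := if_pos hu
          rw [hρu]
          have h0 : (amp Fr 0 : ℝ) = 0 := by
            rcases hamp with h | h
            · rw [h, mul_zero]
              simp
            · rw [h]
              have := Fr.2.2
              simp only [Set.Icc.coe_zero]
              rw [max_eq_right (by linarith)]
          rw [h0]
          exact (φ.1 s).2.1
        · push_neg at hu
          have hρu : ρ.1 u = C := if_neg (not_le.2 hu)
          rw [hρu]
          have hus : u ≤ s := le_trans le_add_self hru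
          have hrs : r ≤ s - δ := by
            refine ENNReal.le_sub_of_add_le_right hδtop ?_
            calc r + δ ≤ r + u := add_le_add_right hu.le r
              _ ≤ s := hru
          have hFr1 : (Fr : ℝ) ≤ ((⨆ ψ ∈ Φ, ψ.1 (s - δ) : unitInterval) : ℝ) :=
            Subtype.coe_le_coe.2 (hFmono hrs)
          have hampC : (amp Fr C : ℝ) ≤ c * (Fr : ℝ) := by
            rcases hamp with h | h
            · rw [h]
              have : ((Fr * C : unitInterval) : ℝ) = (Fr : ℝ) * c := by push_cast; ring
              rw [this, mul_comm]
            · rw [h]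
              have h1 := Fr.2.1
              have h2 := Fr.2.2
              have hCc : (C : ℝ) = c := rfl
              rw [hCc]
              apply max_le
              · nlinarith
              · positivity
          calc (amp Fr C : ℝ) ≤ c * (Fr : ℝ) := hampC
            _ ≤ c * ((⨆ ψ ∈ Φ, ψ.1 (s - δ) : unitInterval) : ℝ) :=
              mul_le_mul_of_nonneg_left hFr1 hc0
            _ ≤ (φ.1 s : ℝ) := hφ s
      have hρt : ρ.1 t = C := if_neg (not_le.2 hδt)
      have hCS : C ≤ S := by
        rw [hSdef]
        calc C = ρ.1 t := hρt.symm
          _ ≤ ⨆ _ : (∀ s : ℝ≥0∞,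
              convProd amp (fun u => ⨆ ψ ∈ Φ, ψ.1 u) ρ.1 s ≤ φ.1 s), ρ.1 t :=
            le_iSup (fun _ => ρ.1 t) hconv
          _ ≤ ⨆ ρ' : DDF, ⨆ _ : (∀ s : ℝ≥0∞,
              convProd amp (fun u => ⨆ ψ ∈ Φ, ψ.1 u) ρ'.1 s ≤ φ.1 s), ρ'.1 t :=
            le_iSup (fun ρ' : DDF => ⨆ _ : (∀ s : ℝ≥0∞,
              convProd amp (fun u => ⨆ ψ ∈ Φ, ψ.1 u) ρ'.1 s ≤ φ.1 s), ρ'.1 t) ρ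
          _ ≤ _ := le_iSup₂ (f := fun (φ' : DDF) (_ : φ' ∈ Φ) =>
              ⨆ ρ' : DDF, ⨆ _ : (∀ s : ℝ≥0∞,
                convProd amp (fun u => ⨆ ψ ∈ Φ, ψ.1 u) ρ'.1 s ≤ φ'.1 s), ρ'.1 t) φ hφΦ
      have : c ≤ (S : ℝ) := Subtype.coe_le_coe.2 hCS
      linarith
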